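/- For every k with 1 ≤ k ≤ 2^m - 1, the block B(k) = [k - (2^{ν₂(k)} - 1), k + (2^{ν₂(k)} - 1)] is contained in {1,...,2^m - 1}, and every index j in B(k) satisfies d_m(j) ≥ d_m(k), with equality only for j = k. -/

import Mathlib

def ν₂ (k : ℕ) : ℕ := padicValNat 2 k

def depth (m k : ℕ) : ℕ := m - ν₂ k

/-- The block of column `k`. -/
def block (k : ℕ) : Finset ℕ := Finset.Icc (k - (2 ^ ν₂ k - 1)) (k + (2 ^ ν₂ k - 1))

/-- `B(k) ⊆ {1,…,2^m - 1}`, every `j ∈ B(k)` has depth `≥ d_m(k)`, with equality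
only for `j = k`. -/
theorem block_subset_and_depth (m k : ℕ) (hk1 : 1 ≤ k) (hk2 : k ≤ 2 ^ m - 1) :
    block k ⊆ Finset.Icc 1 (2 ^ m - 1) ∧
    (∀ j ∈ block k, depth m k ≤ depth m j) ∧
    (∀ j ∈ block k, depth m j = depth m k → j = k) := by
  set v := ν₂ k with hv
  have hdvd : 2 ^ v ∣ k := pow_padicValNat_dvd
  have hle : 2 ^ v ≤ k := Nat.le_of_dvd hk1 hdvd
  have hm : (0:ℕ) < 2 ^ m := Nat.pow_pos (n := m) (by norm_num)
  have hklt : k < 2 ^ m := by omega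
  have hvm : v < m := by
    have : (2:ℕ) ^ v < 2 ^ m := lt_of_le_of_lt hle hklt
    exact (Nat.pow_lt_pow_iff_right (by norm_num)).mp this
  obtain ⟨q, hq⟩ := hdvd
  have hpow : (2:ℕ) ^ v * 2 ^ (m - v) = 2 ^ m := by
    rw [← pow_add]; congr 1; omega
  have hqlt : q < 2 ^ (m - v) := by
    by_contra h
    push_neg at h
    have : 2 ^ m ≤ k := by
      calc 2 ^ m = 2 ^ v * 2 ^ (m - v) := hpow.symm
        _ ≤ 2 ^ v * q := Nat.mul_le_mul_left _ h
        _ = k := hq.symm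
    omega
  have hup : k + 2 ^ v ≤ 2 ^ m := by
    calc k + 2 ^ v = 2 ^ v * (q + 1) := by rw [hq]; ring
      _ ≤ 2 ^ v * 2 ^ (m - v) := Nat.mul_le_mul_left _ (by omega)
      _ = 2 ^ m := hpow
  have hvpos : (0:ℕ) < 2 ^ v := Nat.pow_pos (n := v) (by norm_num)
  -- key: any j in the block with j ≠ k has ν₂ j < v
  have key : ∀ j ∈ block k, j ≠ k → ν₂ j < v := by
    intro j hj hjk
    rw [block, Finset.mem_Icc, ← hv] at hj
    by_contra h
    push_neg at h
    have hdj : (2:ℕ) ^ v ∣ j :=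
      dvd_trans (pow_dvd_pow 2 h) pow_padicValNat_dvd
    have hdk : (2:ℕ) ^ v ∣ k := ⟨q, hq⟩
    rcases lt_or_gt_of_ne hjk with hlt | hgt
    · have hd : (2:ℕ) ^ v ∣ k - j := Nat.dvd_sub hdk hdj
      have : 2 ^ v ≤ k - j := Nat.le_of_dvd (by omega) hd
      omega
    · have hd : (2:ℕ) ^ v ∣ j - k := Nat.dvd_sub hdj hdk
      have : 2 ^ v ≤ j - k := Nat.le_of_dvd (by omega) hd
      omega
  refine ⟨?_, ?_, ?_⟩
  · intro j hj
    rw [block, Finset.mem_Icc, ← hv] at hj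
    rw [Finset.mem_Icc]
    omega
  · intro j hj
    by_cases hjk : j = k
    · rw [hjk]
    · have := key j hj hjk
      unfold depth
      omega
  · intro j hj heq
    by_contra hjk
    have := key j hj hjk
    unfold depth at heq
    omega
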